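/- Let E/F be a (not necessarily Galois) extension of algebraic number fields of relative degree d = [E:F], and let A be a nonzero element of the ring of integers O_E of E. Then there exists an ideal n of O_F with (A·O_E)^d = n·O_E (i.e., the principal ideal A·O_E is ambiguous with respect to E/F) if and only if the quotient A^d / N_{E/F}(A) is a unit of O_E, i.e., if and only if there exists a unit U ∈ O_E^× with A^d = N_{E/F}(A)·U. -/

import Mathlib

set_option maxHeartbeats 800000
set_option synthInstance.maxHeartbeats 200000


open NumberField

/-- **Ambiguous principal ideals.** For an extension `E/F` of number fields of relative
degree `d = [E : F]` and a nonzero algebraic integer `A` of `E`, the principal ideal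
`A·𝓞 E` is ambiguous with respect to `E/F` (i.e. its `d`-th power is the extension of an
ideal of `𝓞 F`) if and only if `A ^ d / N_{E/F}(A)` is a unit of `𝓞 E`. -/
theorem ambiguous_principal_ideal_iff_power_div_norm_is_unit
    (F E : Type*) [Field F] [NumberField F] [Field E] [NumberField E]
    [Algebra F E] (d : ℕ) (hd : d = Module.finrank F E)
    (A : 𝓞 E) (hA : A ≠ 0) :
    (∃ n : Ideal (𝓞 F),
        (Ideal.span {A} : Ideal (𝓞 E)) ^ d = Ideal.map (algebraMap (𝓞 F) (𝓞 E)) n) ↔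
      ∃ U : (𝓞 E)ˣ,
        ((A : E)) ^ d = algebraMap F E (Algebra.norm F ((A : E))) * (((U : 𝓞 E) : E)) := by
  have hd0 : d ≠ 0 := by rw [hd]; exact Module.finrank_pos.ne'
  set B : 𝓞 F := RingOfIntegers.norm F A with hBdef
  have hBcoe : ((algebraMap (𝓞 F) (𝓞 E) B : E)) = algebraMap F E (Algebra.norm F (A : E)) :=
    RingOfIntegers.coe_algebraMap_norm F A
  constructor
  · rintro ⟨n, hn⟩
    -- Step 1 : n ≤ span {B}
    have hstep : n ≤ Ideal.span {B} := by
      intro x hx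
      rw [Ideal.mem_span_singleton]
      have h1 : algebraMap (𝓞 F) (𝓞 E) x ∈ Ideal.span {A} ^ d := by
        rw [hn]; exact Ideal.mem_map_of_mem _ hx
      rw [Ideal.span_singleton_pow, Ideal.mem_span_singleton] at h1
      have h2 : B ^ d ∣ x ^ d := by
        simpa [map_pow, RingOfIntegers.norm_algebraMap, hd] using
          map_dvd (RingOfIntegers.norm F) h1
      exact (IsIntegrallyClosed.pow_dvd_pow_iff hd0).mp h2
    have hmap : Ideal.span {A} ^ d ≤ Ideal.span {algebraMap (𝓞 F) (𝓞 E) B} := by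
      rw [hn]
      calc Ideal.map (algebraMap (𝓞 F) (𝓞 E)) n
          ≤ Ideal.map (algebraMap (𝓞 F) (𝓞 E)) (Ideal.span {B}) := Ideal.map_mono hstep
        _ = Ideal.span {algebraMap (𝓞 F) (𝓞 E) B} := by
            rw [Ideal.map_span, Set.image_singleton]
    -- Step 2 : absolute norms agree
    have hnormQ : ((Algebra.norm ℤ (algebraMap (𝓞 F) (𝓞 E) B) : ℚ)) =
        ((Algebra.norm ℤ A : ℚ)) ^ d := by
      rw [Algebra.coe_norm_int, hBcoe, ← Algebra.norm_norm (R := ℚ) (S := F),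
        Algebra.norm_algebraMap, map_pow, Algebra.norm_norm, ← Algebra.coe_norm_int, hd]
    have hnormZ : Algebra.norm ℤ (algebraMap (𝓞 F) (𝓞 E) B) = (Algebra.norm ℤ A) ^ d := by
      exact_mod_cast hnormQ
    have habs : Ideal.absNorm (Ideal.span {algebraMap (𝓞 F) (𝓞 E) B}) =
        Ideal.absNorm ((Ideal.span {A} : Ideal (𝓞 E)) ^ d) := by
      rw [map_pow, Ideal.absNorm_span_singleton, Ideal.absNorm_span_singleton, hnormZ,
        Int.natAbs_pow]
    -- Step 3 : equality of ideals
    have hIbot : ((Ideal.span {A} : Ideal (𝓞 E)) ^ d) ≠ 0 := by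
      apply pow_ne_zero
      simpa [Ideal.zero_eq_bot, Ideal.span_singleton_eq_bot] using hA
    have hdvd : Ideal.span {algebraMap (𝓞 F) (𝓞 E) B} ∣ (Ideal.span {A} : Ideal (𝓞 E)) ^ d :=
      Ideal.dvd_iff_le.mpr hmap
    obtain ⟨C, hC⟩ := hdvd
    have habs0 : Ideal.absNorm ((Ideal.span {A} : Ideal (𝓞 E)) ^ d) ≠ 0 := by
      rwa [ne_eq, Ideal.absNorm_eq_zero_iff, ← Ideal.zero_eq_bot]
    have hC1 : Ideal.absNorm C = 1 := by
      have h := congrArg Ideal.absNorm hC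
      rw [_root_.map_mul, habs] at h
      have h' : Ideal.absNorm ((Ideal.span {A} : Ideal (𝓞 E)) ^ d) * 1 =
          Ideal.absNorm ((Ideal.span {A} : Ideal (𝓞 E)) ^ d) * Ideal.absNorm C := by
        rw [mul_one]; exact h
      exact (mul_left_cancel₀ habs0 h').symm
    have hCe : C = ⊤ := Ideal.absNorm_eq_one_iff.mp hC1
    have heq : (Ideal.span {A} : Ideal (𝓞 E)) ^ d =
        Ideal.span {algebraMap (𝓞 F) (𝓞 E) B} := by
      rw [hC, hCe, Ideal.mul_top]
    rw [Ideal.span_singleton_pow, Ideal.span_singleton_eq_span_singleton] at heq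
    obtain ⟨u, hu⟩ := heq
    refine ⟨u⁻¹, ?_⟩
    have h3 : A ^ d = algebraMap (𝓞 F) (𝓞 E) B * ↑u⁻¹ := by
      rw [← hu, mul_assoc]
      simp
    have h4 := congrArg (algebraMap (𝓞 E) E) h3
    rw [map_mul, map_pow] at h4
    rw [RingOfIntegers.coe_eq_algebraMap] at hBcoe ⊢
    rw [h4, hBcoe]
  · rintro ⟨U, hU⟩
    refine ⟨Ideal.span {B}, ?_⟩
    have h3 : A ^ d = algebraMap (𝓞 F) (𝓞 E) B * (U : 𝓞 E) := by
      rw [RingOfIntegers.ext_iff]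
      push_cast
      rw [hU, ← hBcoe]
    rw [Ideal.map_span, Set.image_singleton, Ideal.span_singleton_pow,
      Ideal.span_singleton_eq_span_singleton]
    exact ⟨U⁻¹, by rw [h3, mul_assoc]; simp⟩
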